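/- Second variation of length along a geodesic family of plane curves: let ε > 0, let f : ℝ → ℝ be smooth and 2π-periodic, and let γ : ℝ × (−ε,ε) → ℂ be smooth with γ(s+2π, t) = γ(s,t) for all s,t, satisfying the geodesic family equation ∂γ/∂t(s,t) = i f(s) ∂γ/∂s(s,t) for all (s,t), and with ∂γ/∂s(s,t) ≠ 0 for all (s,t). Assume γ(·,0) is parametrized by arclength, i.e. |∂γ/∂s(s,0)| = 1 for all s, and let κ : ℝ → ℝ be the smooth function (curvature of γ(·,0)) determined by ∂²γ/∂s²(s,0) = i κ(s) ∂γ/∂s(s,0). Then the length λ(t) = ∫₀^{2π} |∂γ/∂s(s,t)| ds is twice differentiable at t = 0 and λ″(0) = ∫₀^{2π} ( f′(s)² + f(s)² κ(s)² ) ds ≥ 0. -/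

import Mathlib

open Real

section aux
variable {E : Type*} [NormedAddCommGroup E] [NormedSpace ℝ E]

lemma slice1 {F : ℝ × ℝ → E} {s t : ℝ} (h : DifferentiableAt ℝ F (s, t)) :
    HasDerivAt (fun s' => F (s', t)) (fderiv ℝ F (s, t) (1, 0)) s := by
  have hg : HasDerivAt (fun s' : ℝ => ((s', t) : ℝ × ℝ)) ((1 : ℝ), (0 : ℝ)) s :=
    HasDerivAt.prodMk (hasDerivAt_id s) (hasDerivAt_const s t)
  exact h.hasFDerivAt.comp_hasDerivAt s hg

lemma slice2 {F : ℝ × ℝ → E} {s t : ℝ} (h : DifferentiableAt ℝ F (s, t)) :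
    HasDerivAt (fun t' => F (s, t')) (fderiv ℝ F (s, t) (0, 1)) t := by
  have hg : HasDerivAt (fun t' : ℝ => ((s, t') : ℝ × ℝ)) ((0 : ℝ), (1 : ℝ)) t :=
    HasDerivAt.prodMk (hasDerivAt_const t s) (hasDerivAt_id t)
  exact h.hasFDerivAt.comp_hasDerivAt t hg

lemma fderiv_clm_apply_comm {F : ℝ × ℝ → E} {U : Set (ℝ × ℝ)} (hU : IsOpen U)
    (hF : ContDiffOn ℝ (⊤ : ℕ∞) F U) {p : ℝ × ℝ} (hp : p ∈ U) (u w : ℝ × ℝ) :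
    fderiv ℝ (fun q => fderiv ℝ F q u) p w = fderiv ℝ (fun q => fderiv ℝ F q w) p u := by
  have hdF : ContDiffOn ℝ (⊤ : ℕ∞) (fderiv ℝ F) U := hF.fderiv_of_isOpen hU (by exact_mod_cast le_top)
  have hev : ∀ᶠ q in nhds p, HasFDerivAt F (fderiv ℝ F q) q := by
    filter_upwards [hU.mem_nhds hp] with q hq
    exact ((hF.contDiffAt (hU.mem_nhds hq)).differentiableAt (by simp)).hasFDerivAt
  have h2 : HasFDerivAt (fderiv ℝ F) (fderiv ℝ (fderiv ℝ F) p) p :=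
    ((hdF.contDiffAt (hU.mem_nhds hp)).differentiableAt (by simp)).hasFDerivAt
  have hsymm := second_derivative_symmetric_of_eventually hev h2 u w
  have key : ∀ v : ℝ × ℝ, ∀ q ∈ U, fderiv ℝ (fun q' => fderiv ℝ F q' v) q
      = (fderiv ℝ (fderiv ℝ F) q).flip v := by
    intro v q hq
    have h2q : HasFDerivAt (fderiv ℝ F) (fderiv ℝ (fderiv ℝ F) q) q :=
      ((hdF.contDiffAt (hU.mem_nhds hq)).differentiableAt (by simp)).hasFDerivAt
    have := h2q.clm_apply (hasFDerivAt_const v q)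
    simpa using this.fderiv
  rw [key u p hp, key w p hp]
  simpa using hsymm.symm
end aux

theorem second_variation_of_length
    (ε : ℝ) (hε : 0 < ε)
    (f : ℝ → ℝ) (hf : ContDiff ℝ (⊤ : ℕ∞) f)
    (hfper : ∀ s : ℝ, f (s + 2 * π) = f s)
    (γ : ℝ → ℝ → ℂ)
    (hγ : ContDiffOn ℝ (⊤ : ℕ∞) (fun p : ℝ × ℝ => γ p.1 p.2)
      (Set.univ ×ˢ Set.Ioo (-ε) ε))
    (hγper : ∀ s : ℝ, ∀ t ∈ Set.Ioo (-ε) ε, γ (s + 2 * π) t = γ s t)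
    (hgeo : ∀ s : ℝ, ∀ t ∈ Set.Ioo (-ε) ε,
      deriv (fun t' => γ s t') t = Complex.I * (f s : ℂ) * deriv (fun s' => γ s' t) s)
    (himm : ∀ s : ℝ, ∀ t ∈ Set.Ioo (-ε) ε, deriv (fun s' => γ s' t) s ≠ 0)
    (harc : ∀ s : ℝ, ‖deriv (fun s' => γ s' 0) s‖ = 1)
    (κ : ℝ → ℝ) (hκ : ContDiff ℝ (⊤ : ℕ∞) κ)
    (hcurv : ∀ s : ℝ, deriv (fun s' => deriv (fun s'' => γ s'' 0) s') s
      = Complex.I * (κ s : ℂ) * deriv (fun s' => γ s' 0) s) :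
    let lam : ℝ → ℝ := fun t =>
      ∫ s in (0:ℝ)..(2 * π), ‖deriv (fun s' => γ s' t) s‖
    DifferentiableAt ℝ lam 0 ∧ DifferentiableAt ℝ (deriv lam) 0 ∧
    deriv (deriv lam) 0 = ∫ s in (0:ℝ)..(2 * π), ((deriv f s) ^ 2 + (f s) ^ 2 * (κ s) ^ 2) ∧
    0 ≤ ∫ s in (0:ℝ)..(2 * π), ((deriv f s) ^ 2 + (f s) ^ 2 * (κ s) ^ 2) := by
  intro lam
  set Io : Set ℝ := Set.Ioo (-ε) ε with hIo
  have hΩ : IsOpen (Set.univ ×ˢ Io : Set (ℝ × ℝ)) := isOpen_univ.prod isOpen_Ioo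
  set Ω : Set (ℝ × ℝ) := Set.univ ×ˢ Io with hΩdef
  set Γ : ℝ × ℝ → ℂ := fun p => γ p.1 p.2 with hΓdef
  have hmem : ∀ s : ℝ, ∀ t ∈ Io, ((s, t) : ℝ × ℝ) ∈ Ω := fun s t ht => ⟨trivial, ht⟩
  have h0 : (0 : ℝ) ∈ Io := ⟨by linarith, hε⟩
  have hΓd : ∀ p ∈ Ω, DifferentiableAt ℝ Γ p := fun p hp =>
    (hγ.contDiffAt (hΩ.mem_nhds hp)).differentiableAt (by simp)
  set V : ℝ × ℝ → ℂ := fun p => fderiv ℝ Γ p (1, 0) with hVdef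
  have hVsm : ContDiffOn ℝ (⊤ : ℕ∞) V Ω :=
    (hγ.fderiv_of_isOpen hΩ (by exact_mod_cast le_top)).clm_apply contDiffOn_const
  have hVd : ∀ p ∈ Ω, DifferentiableAt ℝ V p := fun p hp =>
    (hVsm.contDiffAt (hΩ.mem_nhds hp)).differentiableAt (by simp)
  have hVeq : ∀ s : ℝ, ∀ t ∈ Io, deriv (fun s' => γ s' t) s = V (s, t) := by
    intro s t ht
    exact (slice1 (hΓd _ (hmem s t ht))).deriv
  have hTeq : ∀ s : ℝ, ∀ t ∈ Io, deriv (fun t' => γ s t') t = fderiv ℝ Γ (s, t) (0, 1) := by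
    intro s t ht
    exact (slice2 (hΓd _ (hmem s t ht))).deriv
  have hT : ∀ p ∈ Ω, fderiv ℝ Γ p (0, 1) = Complex.I * (f p.1 : ℂ) * V p := by
    rintro ⟨s, t⟩ ⟨-, ht⟩
    rw [← hTeq s t ht, hgeo s t ht, hVeq s t ht]
  set Vs : ℝ × ℝ → ℂ := fun p => fderiv ℝ V p (1, 0) with hVsdef
  set Vt : ℝ × ℝ → ℂ := fun p => fderiv ℝ V p (0, 1) with hVtdef
  have hVssm : ContDiffOn ℝ (⊤ : ℕ∞) Vs Ω :=
    (hVsm.fderiv_of_isOpen hΩ (by exact_mod_cast le_top)).clm_apply contDiffOn_const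
  have hVtsm : ContDiffOn ℝ (⊤ : ℕ∞) Vt Ω :=
    (hVsm.fderiv_of_isOpen hΩ (by exact_mod_cast le_top)).clm_apply contDiffOn_const
  have hVsd : ∀ p ∈ Ω, DifferentiableAt ℝ Vs p := fun p hp =>
    (hVssm.contDiffAt (hΩ.mem_nhds hp)).differentiableAt (by simp)
  set Vss : ℝ × ℝ → ℂ := fun p => fderiv ℝ Vs p (1, 0) with hVssdef
  set Vst : ℝ × ℝ → ℂ := fun p => fderiv ℝ Vs p (0, 1) with hVstdef
  have hVstsm : ContDiffOn ℝ (⊤ : ℕ∞) Vst Ω :=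
    (hVssm.fderiv_of_isOpen hΩ (by exact_mod_cast le_top)).clm_apply contDiffOn_const
  -- the derivative of f, as ContDiff
  have hftop : ContDiff ℝ (⊤ : ℕ∞) f := hf
  have hf1 : ContDiff ℝ (⊤ : ℕ∞) (deriv f) := by
    have := (contDiff_infty_iff_deriv.mp (by exact_mod_cast hf)).2
    exact_mod_cast this
  have hκ1 : ContDiff ℝ (⊤ : ℕ∞) (deriv κ) := by
    have := (contDiff_infty_iff_deriv.mp (by exact_mod_cast hκ)).2
    exact_mod_cast this
  have hVslice_t : ∀ s : ℝ, ∀ t ∈ Io, HasDerivAt (fun t' => V (s, t')) (Vt (s, t)) t :=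
    fun s t ht => slice2 (hVd _ (hmem s t ht))
  have hVslice_s : ∀ s : ℝ, ∀ t ∈ Io, HasDerivAt (fun s' => V (s', t)) (Vs (s, t)) s :=
    fun s t ht => slice1 (hVd _ (hmem s t ht))
  -- key: Vt = I f' V + I f Vs on Ω
  have hVt : ∀ s : ℝ, ∀ t ∈ Io,
      Vt (s, t) = Complex.I * ((deriv f s : ℝ) : ℂ) * V (s, t) + Complex.I * (f s : ℂ) * Vs (s, t) := by
    intro s t ht
    have hp := hmem s t ht
    have hsymm := fderiv_clm_apply_comm hΩ hγ hp (1, 0) (0, 1)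
    -- Vt (s,t) = fderiv (fun q => fderiv Γ q (0,1)) (s,t) (1,0)
    have h1 : Vt (s, t) = fderiv ℝ (fun q => fderiv ℝ Γ q (0, 1)) (s, t) (1, 0) := by
      simp only [hVtdef, hVdef]
      exact hsymm
    -- rewrite the inner function on a neighborhood
    have hev : (fun q => fderiv ℝ Γ q (0, 1)) =ᶠ[nhds ((s, t) : ℝ × ℝ)]
        (fun q => Complex.I * (f q.1 : ℂ) * V q) := by
      filter_upwards [hΩ.mem_nhds hp] with q hq using hT q hq
    have h2 : fderiv ℝ (fun q => fderiv ℝ Γ q (0, 1)) (s, t)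
        = fderiv ℝ (fun q => Complex.I * (f q.1 : ℂ) * V q) (s, t) := hev.fderiv_eq
    -- compute the RHS derivative in the (1,0) direction via the 1-D slice
    have hWd : DifferentiableAt ℝ (fun q : ℝ × ℝ => Complex.I * (f q.1 : ℂ) * V q) (s, t) := by
      apply DifferentiableAt.mul _ (hVd _ hp)
      exact (differentiable_const _).differentiableAt.mul
        (((Complex.ofRealCLM.differentiable.comp (hf.differentiable
          (by simp))).differentiableAt).comp _ differentiable_fst.differentiableAt)
    have hslice := slice1 hWd
    have hdirect : HasDerivAt (fun s' => Complex.I * (f s' : ℂ) * V (s', t))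
        (Complex.I * ((deriv f s : ℝ) : ℂ) * V (s, t) + Complex.I * (f s : ℂ) * Vs (s, t)) s := by
      have hfc : HasDerivAt (fun s' => (f s' : ℂ)) (((deriv f s : ℝ) : ℂ)) s :=
        ((hf.differentiable (by simp)) s).hasDerivAt.ofReal_comp
      have := ((hfc.const_mul Complex.I).mul (hVslice_s s t ht))
      convert this using 1
      all_goals rfl
    have := hslice.unique hdirect
    rw [h1, h2, ← this]
  
  -- values at t = 0
  have hv0d : ∀ s : ℝ, HasDerivAt (fun s' => V (s', 0)) (Vs (s, 0)) s :=
    fun s => hVslice_s s 0 h0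
  have habs1 : ∀ s : ℝ, ‖V (s, 0)‖ = 1 := by
    intro s; rw [← hVeq s 0 h0]; exact harc s
  have hVs0 : ∀ s : ℝ, Vs (s, 0) = Complex.I * (κ s : ℂ) * V (s, 0) := by
    intro s
    have h1 : deriv (fun s' => V (s', 0)) s = Vs (s, 0) := (hv0d s).deriv
    have h2 : (fun s' => V (s', 0)) = (fun s' => deriv (fun s'' => γ s'' 0) s') :=
      funext fun s' => (hVeq s' 0 h0).symm
    rw [← h1, h2, hcurv s, hVeq s 0 h0]
  have hκd : ∀ s : ℝ, HasDerivAt (fun s' => ((κ s' : ℝ) : ℂ)) (((deriv κ s : ℝ) : ℂ)) s :=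
    fun s => ((hκ.differentiable (by simp)) s).hasDerivAt.ofReal_comp
  have hfd : ∀ s : ℝ, HasDerivAt (fun s' => ((f s' : ℝ) : ℂ)) (((deriv f s : ℝ) : ℂ)) s :=
    fun s => ((hf.differentiable (by simp)) s).hasDerivAt.ofReal_comp
  have hf'd : ∀ s : ℝ, HasDerivAt (fun s' => ((deriv f s' : ℝ) : ℂ))
      (((deriv (deriv f) s : ℝ) : ℂ)) s :=
    fun s => ((hf1.differentiable (by simp)) s).hasDerivAt.ofReal_comp
  have hVss0 : ∀ s : ℝ, Vss (s, 0) = Complex.I * ((deriv κ s : ℝ) : ℂ) * V (s, 0)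
      + Complex.I * (κ s : ℂ) * (Complex.I * (κ s : ℂ) * V (s, 0)) := by
    intro s
    have h1 : HasDerivAt (fun s' => Vs (s', 0)) (Vss (s, 0)) s := slice1 (hVsd _ (hmem s 0 h0))
    have h2 : (fun s' => Vs (s', 0)) = fun s' => Complex.I * (κ s' : ℂ) * V (s', 0) :=
      funext fun s' => hVs0 s'
    rw [h2] at h1
    have hdirect : HasDerivAt (fun s' => Complex.I * (κ s' : ℂ) * V (s', 0))
        (Complex.I * ((deriv κ s : ℝ) : ℂ) * V (s, 0)
          + Complex.I * (κ s : ℂ) * (Complex.I * (κ s : ℂ) * V (s, 0))) s := by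
      have h3 := (((hκd s).const_mul Complex.I).mul (hv0d s))
      rw [hVs0 s] at h3
      convert h3 using 1
      all_goals rfl
    exact h1.unique hdirect
  -- Vst via symmetry
  have hVt' : ∀ p ∈ Ω, Vt p = Complex.I * ((deriv f p.1 : ℝ) : ℂ) * V p
      + Complex.I * (f p.1 : ℂ) * Vs p := by
    rintro ⟨a, b⟩ ⟨-, hb⟩; exact hVt a b hb
  have hVst0 : ∀ s : ℝ, Vst (s, 0) = Complex.I * ((deriv (deriv f) s : ℝ) : ℂ) * V (s, 0)
      + Complex.I * ((deriv f s : ℝ) : ℂ) * Vs (s, 0)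
      + (Complex.I * ((deriv f s : ℝ) : ℂ) * Vs (s, 0)
        + Complex.I * (f s : ℂ) * Vss (s, 0)) := by
    intro s
    have hp := hmem s 0 h0
    have hsymm := fderiv_clm_apply_comm hΩ hVsm hp (1, 0) (0, 1)
    have h1 : Vst (s, 0) = fderiv ℝ (fun q => fderiv ℝ V q (0, 1)) (s, 0) (1, 0) := by
      simp only [hVstdef, hVsdef]
      exact hsymm
    have hev : (fun q => fderiv ℝ V q (0, 1)) =ᶠ[nhds ((s, 0) : ℝ × ℝ)]
        (fun q => Complex.I * ((deriv f q.1 : ℝ) : ℂ) * V q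
          + Complex.I * (f q.1 : ℂ) * Vs q) := by
      filter_upwards [hΩ.mem_nhds hp] with q hq
      have h4 := hVt' q hq
      simpa only [hVtdef] using h4
    have h2 : fderiv ℝ (fun q => fderiv ℝ V q (0, 1)) (s, 0)
        = fderiv ℝ (fun q => Complex.I * ((deriv f q.1 : ℝ) : ℂ) * V q
          + Complex.I * (f q.1 : ℂ) * Vs q) (s, 0) := hev.fderiv_eq
    have hWd : DifferentiableAt ℝ (fun q : ℝ × ℝ => Complex.I * ((deriv f q.1 : ℝ) : ℂ) * V q
        + Complex.I * (f q.1 : ℂ) * Vs q) (s, 0) := by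
      apply DifferentiableAt.add
      · apply DifferentiableAt.mul _ (hVd _ hp)
        exact (differentiable_const _).differentiableAt.mul
          (((Complex.ofRealCLM.differentiable.comp (hf1.differentiable
            (by simp))).differentiableAt).comp _
              differentiable_fst.differentiableAt)
      · apply DifferentiableAt.mul _ (hVsd _ hp)
        exact (differentiable_const _).differentiableAt.mul
          (((Complex.ofRealCLM.differentiable.comp (hf.differentiable
            (by simp))).differentiableAt).comp _
              differentiable_fst.differentiableAt)
    have hslice := slice1 hWd
    have hVsd0 : HasDerivAt (fun s' => Vs (s', 0)) (Vss (s, 0)) s := slice1 (hVsd _ hp)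
    have hdirect : HasDerivAt (fun s' => Complex.I * ((deriv f s' : ℝ) : ℂ) * V (s', 0)
        + Complex.I * (f s' : ℂ) * Vs (s', 0))
        (Complex.I * ((deriv (deriv f) s : ℝ) : ℂ) * V (s, 0)
          + Complex.I * ((deriv f s : ℝ) : ℂ) * Vs (s, 0)
          + (Complex.I * ((deriv f s : ℝ) : ℂ) * Vs (s, 0)
            + Complex.I * (f s : ℂ) * Vss (s, 0))) s := by
      have ha := (((hf'd s).const_mul Complex.I).mul (hv0d s))
      have hb := (((hfd s).const_mul Complex.I).mul hVsd0)
      have hab := ha.add hb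
      convert hab using 1
      all_goals rfl
    have h3 := hslice.unique hdirect
    rw [h1, h2, ← h3]
  
  -- the functions N, R, Rt, Nt, G, H
  set N : ℝ × ℝ → ℝ := fun p => ((starRingEnd ℂ) (V p) * Vs p).im with hNdef
  set R : ℝ × ℝ → ℝ := fun p => ‖V p‖ with hRdef
  set Rt : ℝ × ℝ → ℝ := fun p => ((starRingEnd ℂ) (V p) * Vt p).re / ‖V p‖
    with hRtdef
  set Nt : ℝ × ℝ → ℝ :=
    fun p => ((starRingEnd ℂ) (Vt p) * Vs p + (starRingEnd ℂ) (V p) * Vst p).im with hNtdef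
  set G : ℝ × ℝ → ℝ := fun p => -(f p.1) * (N p / R p) with hGdef
  set H : ℝ × ℝ → ℝ := fun p => -(f p.1) * ((Nt p * R p - N p * Rt p) / (R p) ^ 2) with hHdef
  have hV0 : ∀ p ∈ Ω, V p ≠ 0 := by
    rintro ⟨a, b⟩ ⟨-, hb⟩
    rw [← hVeq a b hb]
    exact himm a b hb
  have hRpos : ∀ p ∈ Ω, 0 < R p := fun p hp => norm_pos_iff.mpr (hV0 p hp)
  have hVstslice : ∀ s : ℝ, ∀ t ∈ Io, HasDerivAt (fun t' => Vs (s, t')) (Vst (s, t)) t :=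
    fun s t ht => slice2 (hVsd _ (hmem s t ht))
  -- derivative in t of R
  have hRt : ∀ s : ℝ, ∀ t ∈ Io, HasDerivAt (fun t' => R (s, t')) (Rt (s, t)) t := by
    intro s t ht
    have hA := hVslice_t s t ht
    have hre : HasDerivAt (fun t' => (V (s, t')).re) ((Vt (s, t)).re) t := by
      exact Complex.reCLM.hasFDerivAt.comp_hasDerivAt t hA
    have him : HasDerivAt (fun t' => (V (s, t')).im) ((Vt (s, t)).im) t := by
      exact Complex.imCLM.hasFDerivAt.comp_hasDerivAt t hA
    have hns : HasDerivAt (fun t' => Complex.normSq (V (s, t')))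
        (2 * ((starRingEnd ℂ) (V (s, t)) * Vt (s, t)).re) t := by
      have h := (hre.mul hre).add (him.mul him)
      have hfn : (fun t' => (V (s, t')).re * (V (s, t')).re
          + (V (s, t')).im * (V (s, t')).im) = fun t' => Complex.normSq (V (s, t')) :=
        funext fun t' => (Complex.normSq_apply _).symm
      rw [show ((fun t' => (V (s, t')).re) * (fun t' => (V (s, t')).re) + (fun t' => (V (s, t')).im) * fun t' => (V (s, t')).im) = fun t' => Complex.normSq (V (s, t')) from hfn] at h
      refine h.congr_deriv ?_
      simp [Complex.mul_re, Complex.conj_re, Complex.conj_im]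
      ring
    have hq0 : Complex.normSq (V (s, t)) ≠ 0 := by
      simpa [Complex.normSq_eq_zero] using hV0 _ (hmem s t ht)
    have hsq := (Real.hasDerivAt_sqrt hq0).comp t hns
    have hfn2 : (fun t' => Real.sqrt (Complex.normSq (V (s, t'))))
        = fun t' => R (s, t') := by
      funext t'
      rw [hRdef]
      simp [Complex.norm_def]
    simp only [Function.comp_def] at hsq
    rw [hfn2] at hsq
    refine hsq.congr_deriv ?_
    rw [hRtdef]
    simp only [Complex.norm_def]
    field_simp
  -- derivative in t of N
  have hNt : ∀ s : ℝ, ∀ t ∈ Io, HasDerivAt (fun t' => N (s, t')) (Nt (s, t)) t := by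
    intro s t ht
    have hA := hVslice_t s t ht
    have hB := hVstslice s t ht
    have hconj : HasDerivAt (fun t' => (starRingEnd ℂ) (V (s, t')))
        ((starRingEnd ℂ) (Vt (s, t))) t := by
      simpa [Complex.star_def] using hA.star
    have hmul := hconj.mul hB
    have h := Complex.imCLM.hasFDerivAt.comp_hasDerivAt t hmul
    simpa [hNdef, hNtdef, Function.comp_def] using h
  -- derivative in t of G
  have hGt : ∀ s : ℝ, ∀ t ∈ Io, HasDerivAt (fun t' => G (s, t')) (H (s, t)) t := by
    intro s t ht
    have hdiv := (hNt s t ht).div (hRt s t ht) (ne_of_gt (hRpos _ (hmem s t ht)))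
    have h := hdiv.const_mul (-(f s))
    simpa [hGdef, hHdef] using h
  -- Rt = G on Ω
  have hGρ : ∀ s : ℝ, ∀ t ∈ Io, Rt (s, t) = G (s, t) := by
    intro s t ht
    have key : ((starRingEnd ℂ) (V (s, t)) * Vt (s, t)).re = -(f s) * N (s, t) := by
      rw [hVt s t ht, hNdef]
      simp [Complex.mul_re, Complex.mul_im, Complex.add_re, Complex.I_re, Complex.I_im,
        Complex.ofReal_re, Complex.ofReal_im, Complex.conj_re, Complex.conj_im]
      ring
    simp only [hRtdef, hGdef, hRdef]
    rw [key]
    ring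
  -- derivative of the integrand for lam
  have hlamInt : ∀ s : ℝ, ∀ t ∈ Io,
      HasDerivAt (fun t' => ‖deriv (fun s' => γ s' t') s‖) (G (s, t)) t := by
    intro s t ht
    have h := hRt s t ht
    rw [hGρ s t ht] at h
    apply h.congr_of_eventuallyEq
    filter_upwards [isOpen_Ioo.mem_nhds ht] with t' ht'
    rw [hVeq s t' ht', hRdef]
  
  -- continuity
  have hVc : ContinuousOn V Ω := hVsm.continuousOn
  have hVsc : ContinuousOn Vs Ω := hVssm.continuousOn
  have hVtc : ContinuousOn Vt Ω := hVtsm.continuousOn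
  have hVstc : ContinuousOn Vst Ω := hVstsm.continuousOn
  have hconjV : ContinuousOn (fun p => (starRingEnd ℂ) (V p)) Ω := by
    simpa [Complex.star_def] using hVc.star
  have hconjVt : ContinuousOn (fun p => (starRingEnd ℂ) (Vt p)) Ω := by
    simpa [Complex.star_def] using hVtc.star
  have hNc : ContinuousOn N Ω := by
    rw [hNdef]
    exact Complex.continuous_im.comp_continuousOn (hconjV.mul hVsc)
  have hRc : ContinuousOn R Ω := by
    rw [hRdef]
    exact continuous_norm.comp_continuousOn hVc
  have hRne : ∀ p ∈ Ω, R p ≠ 0 := fun p hp => ne_of_gt (hRpos p hp)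
  have hRtc : ContinuousOn Rt Ω := by
    rw [hRtdef]
    exact (Complex.continuous_re.comp_continuousOn (hconjV.mul hVtc)).div
      (continuous_norm.comp_continuousOn hVc) (by simpa [hRdef] using hRne)
  have hNtc : ContinuousOn Nt Ω := by
    rw [hNtdef]
    exact Complex.continuous_im.comp_continuousOn ((hconjVt.mul hVsc).add (hconjV.mul hVstc))
  have hfc : Continuous f := hf.continuous
  have hGc : ContinuousOn G Ω := by
    rw [hGdef]
    exact ((hfc.comp continuous_fst).neg.continuousOn).mul (hNc.div hRc hRne)
  have hHc : ContinuousOn H Ω := by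
    rw [hHdef]
    refine ((hfc.comp continuous_fst).neg.continuousOn).mul (ContinuousOn.div
      ((hNtc.mul hRc).sub (hNc.mul hRtc)) (hRc.pow 2) ?_)
    intro p hp
    exact pow_ne_zero 2 (hRne p hp)
  have hsliceCont : ∀ (W : ℝ × ℝ → ℝ), ContinuousOn W Ω → ∀ t ∈ Io,
      Continuous fun s => W (s, t) := by
    intro W hW t ht
    rw [continuous_iff_continuousAt]
    intro s
    have hcurve : ContinuousAt (fun s' : ℝ => ((s', t) : ℝ × ℝ)) s :=
      (continuous_id.prodMk continuous_const).continuousAt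
    have hcomp := ContinuousAt.comp (x := s) (hW.continuousAt (hΩ.mem_nhds (hmem s t ht))) hcurve
    exact hcomp
  -- differentiation under the integral sign
  have key : ∀ (F F' : ℝ × ℝ → ℝ), ContinuousOn F Ω → ContinuousOn F' Ω →
      (∀ s : ℝ, ∀ t ∈ Io, HasDerivAt (fun t' => F (s, t')) (F' (s, t)) t) →
      ∀ t₀ ∈ Io, HasDerivAt (fun t => ∫ s in (0:ℝ)..(2 * π), F (s, t))
        (∫ s in (0:ℝ)..(2 * π), F' (s, t₀)) t₀ := by
    intro F F' hFc hF'c hFd t₀ ht₀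
    obtain ⟨δ, hδ, hball⟩ := Metric.isOpen_iff.mp isOpen_Ioo t₀ ht₀
    have hδ2 : 0 < δ / 2 := by linarith
    have hcb : Metric.closedBall t₀ (δ / 2) ⊆ Io := by
      refine subset_trans ?_ hball
      intro x hx
      have := Metric.mem_closedBall.mp hx
      exact Metric.mem_ball.mpr (by linarith)
    set K : Set (ℝ × ℝ) := Set.Icc (0:ℝ) (2 * π) ×ˢ Metric.closedBall t₀ (δ / 2) with hK
    have hKcomp : IsCompact K := isCompact_Icc.prod (isCompact_closedBall _ _)
    have hKsub : K ⊆ Ω := fun p hp => ⟨trivial, hcb hp.2⟩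
    obtain ⟨C, hC⟩ := hKcomp.exists_bound_of_continuousOn (hF'c.mono hKsub)
    have h2π : (0:ℝ) ≤ 2 * π := by positivity
    have hmemI : ∀ s ∈ Set.uIoc (0:ℝ) (2 * π), s ∈ Set.Icc (0:ℝ) (2 * π) := by
      intro s hs
      rw [Set.uIoc_of_le h2π] at hs
      exact Set.Ioc_subset_Icc_self hs
    have := (intervalIntegral.hasDerivAt_integral_of_dominated_loc_of_deriv_le
      (μ := MeasureTheory.volume) (F := fun t s => F (s, t)) (F' := fun t s => F' (s, t)) (bound := fun _ => C)
      (a := 0) (b := 2 * π) (x₀ := t₀) (Metric.ball_mem_nhds t₀ hδ2)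
      ?_ ?_ ?_ ?_ ?_ ?_).2
    · exact this
    · filter_upwards [isOpen_Ioo.mem_nhds ht₀] with x hx
      exact (hsliceCont F hFc x hx).aestronglyMeasurable
    · exact (hsliceCont F hFc t₀ ht₀).intervalIntegrable _ _
    · exact (hsliceCont F' hF'c t₀ ht₀).aestronglyMeasurable
    · refine Filter.Eventually.of_forall ?_
      intro s hs x hx
      exact hC (s, x) ⟨hmemI s hs, Metric.ball_subset_closedBall hx⟩
    · exact intervalIntegrable_const
    · refine Filter.Eventually.of_forall ?_
      intro s hs x hx
      exact hFd s x (hcb (Metric.ball_subset_closedBall hx))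
  -- first derivative of lam
  have hRG : ∀ s : ℝ, ∀ t ∈ Io, HasDerivAt (fun t' => R (s, t')) (G (s, t)) t := by
    intro s t ht
    have h := hRt s t ht
    rwa [hGρ s t ht] at h
  have hlam1 : ∀ t₀ ∈ Io, HasDerivAt lam (∫ s in (0:ℝ)..(2 * π), G (s, t₀)) t₀ := by
    intro t₀ ht₀
    have hkey := key R G hRc hGc hRG t₀ ht₀
    apply hkey.congr_of_eventuallyEq
    filter_upwards [isOpen_Ioo.mem_nhds ht₀] with x hx
    apply intervalIntegral.integral_congr
    intro s _
    show ‖deriv (fun s' => γ s' x) s‖ = ‖V (s, x)‖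
    rw [hVeq s x hx]
  have hd1 : DifferentiableAt ℝ lam 0 := (hlam1 0 h0).differentiableAt
  have hmu : HasDerivAt (fun t => ∫ s in (0:ℝ)..(2 * π), G (s, t))
      (∫ s in (0:ℝ)..(2 * π), H (s, 0)) 0 := key G H hGc hHc hGt 0 h0
  have hevd : deriv lam =ᶠ[nhds (0:ℝ)] (fun t => ∫ s in (0:ℝ)..(2 * π), G (s, t)) := by
    filter_upwards [isOpen_Ioo.mem_nhds h0] with x hx
    exact (hlam1 x hx).deriv
  have hd2 : DifferentiableAt ℝ (deriv lam) 0 :=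
    hmu.differentiableAt.congr_of_eventuallyEq hevd
  have hd2v : deriv (deriv lam) 0 = ∫ s in (0:ℝ)..(2 * π), H (s, 0) := by
    rw [hevd.deriv_eq]
    exact hmu.deriv
  
  -- compute H (s, 0)
  have hre2 : ∀ s : ℝ, (V (s, 0)).re ^ 2 + (V (s, 0)).im ^ 2 = 1 := by
    intro s
    have h1 : Complex.normSq (V (s, 0)) = 1 := by
      rw [Complex.normSq_eq_norm_sq, habs1 s]; norm_num
    rw [Complex.normSq_apply] at h1
    nlinarith [h1]
  have hN0 : ∀ s : ℝ, N (s, 0) = κ s := by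
    intro s
    rw [hNdef]
    simp only
    rw [hVs0 s]
    simp only [Complex.mul_im, Complex.mul_re, Complex.I_re, Complex.I_im,
      Complex.ofReal_re, Complex.ofReal_im, Complex.conj_re, Complex.conj_im]
    linear_combination (κ s) * hre2 s
  have hR0 : ∀ s : ℝ, R (s, 0) = 1 := fun s => by rw [hRdef]; exact habs1 s
  have hRt0 : ∀ s : ℝ, Rt (s, 0) = -(f s * κ s) := by
    intro s
    rw [hRtdef]
    simp only
    rw [habs1 s, div_one, hVt s 0 h0, hVs0 s]
    simp only [Complex.mul_im, Complex.mul_re, Complex.add_re, Complex.add_im,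
      Complex.I_re, Complex.I_im, Complex.ofReal_re, Complex.ofReal_im,
      Complex.conj_re, Complex.conj_im]
    linear_combination (-(f s * κ s)) * hre2 s
  have hNt0 : ∀ s : ℝ, Nt (s, 0) = deriv (deriv f) s - 2 * f s * (κ s) ^ 2 := by
    intro s
    rw [hNtdef]
    simp only
    rw [hVst0 s, hVss0 s, hVt s 0 h0, hVs0 s]
    simp only [map_add, map_mul, Complex.conj_I, Complex.conj_ofReal,
      Complex.mul_im, Complex.mul_re, Complex.add_re, Complex.add_im,
      Complex.I_re, Complex.I_im, Complex.ofReal_re, Complex.ofReal_im,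
      Complex.conj_re, Complex.conj_im, Complex.neg_re, Complex.neg_im]
    linear_combination (deriv (deriv f) s - 2 * f s * (κ s) ^ 2) * hre2 s
  have hH0 : ∀ s : ℝ, H (s, 0) = -(f s * deriv (deriv f) s) + (f s) ^ 2 * (κ s) ^ 2 := by
    intro s
    rw [hHdef]
    simp only
    rw [hN0 s, hR0 s, hRt0 s, hNt0 s]
    ring
  -- integration by parts
  have hfint : IntervalIntegrable (fun s => deriv f s * deriv f s)
      MeasureTheory.volume 0 (2 * π) := (hf1.continuous.mul hf1.continuous).intervalIntegrable _ _
  have hfint2 : IntervalIntegrable (fun s => f s * deriv (deriv f) s)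
      MeasureTheory.volume 0 (2 * π) := by
    have hf2 : Continuous (deriv (deriv f)) := by
      have := (contDiff_infty_iff_deriv.mp (by exact_mod_cast hf1)).2
      exact this.continuous
    exact (hfc.mul hf2).intervalIntegrable _ _
  have hf2c : Continuous (deriv (deriv f)) := by
    have h := (contDiff_infty_iff_deriv.mp (by exact_mod_cast hf1)).2
    exact h.continuous
  have hfper' : deriv f (2 * π) = deriv f 0 := by
    have h1 : (fun x => f (x + 2 * π)) = f := funext hfper
    have h2 := deriv_comp_add_const f (2 * π) 0
    rw [h1] at h2
    simpa using h2.symm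
  have hparts : ∫ s in (0:ℝ)..(2 * π), (deriv f s * deriv f s + f s * deriv (deriv f) s) = 0 := by
    have h := intervalIntegral.integral_deriv_mul_eq_sub
      (u := f) (v := deriv f) (u' := deriv f) (v' := deriv (deriv f)) (a := 0) (b := 2 * π)
      (fun x _ => ((hf.differentiable (by simp)) x).hasDerivAt)
      (fun x _ => ((hf1.differentiable (by simp)) x).hasDerivAt)
      (hf1.continuous.intervalIntegrable _ _) (hf2c.intervalIntegrable _ _)
    rw [h, hfper']
    have h3 : f (2 * π) = f 0 := by simpa using hfper 0
    rw [h3]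
    ring
  -- final integral identity
  have hκc : Continuous κ := hκ.continuous
  have hIa : IntervalIntegrable (fun s => (deriv f s) ^ 2 + (f s) ^ 2 * (κ s) ^ 2)
      MeasureTheory.volume 0 (2 * π) := by
    exact ((hf1.continuous.pow 2).add ((hfc.pow 2).mul (hκc.pow 2))).intervalIntegrable _ _
  have hIb : IntervalIntegrable (fun s => deriv f s * deriv f s + f s * deriv (deriv f) s)
      MeasureTheory.volume 0 (2 * π) := by
    apply Continuous.intervalIntegrable
    exact (hf1.continuous.mul hf1.continuous).add (hfc.mul hf2c)
  have hfinal : ∫ s in (0:ℝ)..(2 * π), H (s, 0)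
      = ∫ s in (0:ℝ)..(2 * π), ((deriv f s) ^ 2 + (f s) ^ 2 * (κ s) ^ 2) := by
    have e1 : ∀ s : ℝ, H (s, 0) = ((deriv f s) ^ 2 + (f s) ^ 2 * (κ s) ^ 2)
        - ((deriv f s * deriv f s) + (f s * deriv (deriv f) s)) := by
      intro s
      rw [hH0 s]
      ring
    rw [intervalIntegral.integral_congr (g := fun s => ((deriv f s) ^ 2 + (f s) ^ 2 * (κ s) ^ 2)
      - ((deriv f s * deriv f s) + (f s * deriv (deriv f) s))) (fun s _ => e1 s)]
    rw [intervalIntegral.integral_sub hIa hIb, hparts, sub_zero]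
  refine ⟨hd1, hd2, ?_, ?_⟩
  · rw [hd2v, hfinal]
  · apply intervalIntegral.integral_nonneg (by positivity)
    intro u _
    positivity
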